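/- Let A be a finite-dimensional complete left-symmetric algebra over ℂ, and let H be a Cartan subalgebra of the commutator Lie algebra of A for which the root decomposition is canonical. Write A^χ = ⋂_{x∈H} maxGenEigenspace(L(x), χ(x)), and assume dim A^χ ≤ 1 for every χ : H → ℂ. Let λ : H → ℂ be a function with λ(x₀) ≠ 0 for some x₀ ∈ H. Then for all v ∈ A^λ and w ∈ A^{−λ} one has v·w = w·v, i.e., [v,w] = 0. -/

import Mathlib

open Module LieModule LieAlgebra

section aux
variable {A : Type*} [AddCommGroup A] [Module ℂ A]

private lemma maxGenEigenspace_bilinear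
    (B : A →ₗ[ℂ] A →ₗ[ℂ] A) (S T U : Module.End ℂ A)
    (h : ∀ m n, T (B m n) = B (S m) n + B m (U n)) (a b : ℂ) :
    ∀ m n, m ∈ S.maxGenEigenspace a → n ∈ U.maxGenEigenspace b →
      B m n ∈ T.maxGenEigenspace (a + b) := by
  have key : ∀ (j i : ℕ) (m n : A), ((S - a • 1) ^ i) m = 0 → ((U - b • 1) ^ j) n = 0 →
      B m n ∈ T.maxGenEigenspace (a + b) := by
    intro j
    induction j with
    | zero =>
      intro i m n _ hn
      have hn' : n = 0 := by simpa using hn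
      simp [hn']
    | succ j ihj =>
      intro i
      induction i with
      | zero =>
        intro m n hm _
        have hm' : m = 0 := by simpa using hm
        simp [hm']
      | succ i ihi =>
        intro m n hm hn
        have step : (T - (a + b) • 1) (B m n)
            = B ((S - a • 1) m) n + B m ((U - b • 1) n) := by
          simp only [LinearMap.sub_apply, LinearMap.smul_apply, Module.End.one_apply,
            map_sub, map_smul, LinearMap.smul_apply, LinearMap.sub_apply]
          rw [h m n, add_smul]
          abel
        have hm1 : ((S - a • 1) ^ i) ((S - a • 1) m) = 0 := by
          rw [← Module.End.mul_apply, ← pow_succ]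
          exact hm
        have hn1 : ((U - b • 1) ^ j) ((U - b • 1) n) = 0 := by
          rw [← Module.End.mul_apply, ← pow_succ]
          exact hn
        have h1 := ihi ((S - a • 1) m) n hm1 hn
        have h2 := ihj (i + 1) m ((U - b • 1) n) hm hn1
        have hsum : (T - (a + b) • 1) (B m n) ∈ T.maxGenEigenspace (a + b) := by
          rw [step]; exact Submodule.add_mem _ h1 h2
        rw [Module.End.mem_maxGenEigenspace] at hsum ⊢
        obtain ⟨k, hk⟩ := hsum
        exact ⟨k + 1, by rwa [pow_succ, Module.End.mul_apply]⟩
  intro m n hm hn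
  rw [Module.End.mem_maxGenEigenspace] at hm hn
  obtain ⟨i, hi⟩ := hm
  obtain ⟨j, hj⟩ := hn
  exact key j i m n hi hj

private lemma span_eq_of_dim_le_one [FiniteDimensional ℂ A] (S : Submodule ℂ A)
    (hS : Module.finrank ℂ S ≤ 1) {z : A} (hz : z ∈ S) (h0 : z ≠ 0) :
    S = Submodule.span ℂ {z} := by
  have hle : Submodule.span ℂ {z} ≤ S := by
    rw [Submodule.span_le, Set.singleton_subset_iff]; exact hz
  refine (Submodule.eq_of_le_of_finrank_le hle ?_).symm
  rwa [finrank_span_singleton h0]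

private lemma scalar_of_dim_le_one [FiniteDimensional ℂ A] (S : Submodule ℂ A)
    (hS : Module.finrank ℂ S ≤ 1) (T : Module.End ℂ A) (c : ℂ)
    (hinv : ∀ z ∈ S, T z ∈ S)
    (hle : ∀ z ∈ S, z ∈ T.maxGenEigenspace c) :
    ∀ z ∈ S, T z = c • z := by
  intro z hz
  rcases eq_or_ne z 0 with rfl | h0
  · simp
  have hspan := span_eq_of_dim_le_one S hS hz h0
  have hTz : T z ∈ Submodule.span ℂ {z} := hspan ▸ hinv z hz
  obtain ⟨t, ht⟩ := Submodule.mem_span_singleton.mp hTz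
  obtain ⟨k, hk⟩ := (Module.End.mem_maxGenEigenspace _ _ _).mp (hle z hz)
  have hpow : ∀ k : ℕ, ((T - c • 1) ^ k) z = (t - c) ^ k • z := by
    intro k
    induction k with
    | zero => simp
    | succ k ih =>
      have hz1 : (T - c • 1) z = (t - c) • z := by
        rw [LinearMap.sub_apply, LinearMap.smul_apply, Module.End.one_apply, ← ht, ← sub_smul]
      rw [pow_succ', Module.End.mul_apply, ih, map_smul, hz1, smul_smul, ← pow_succ]
  rw [hpow] at hk
  have hk0 : k ≠ 0 := by
    rintro rfl
    simp at hk
    exact h0 hk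
  have htc : (t - c) ^ k = 0 := by
    by_contra hne
    exact h0 (by simpa [hne] using hk)
  have htceq : t = c := sub_eq_zero.mp (pow_eq_zero_iff hk0 |>.mp htc)
  rw [← ht, htceq]

end aux

/-- In a finite-dimensional complete left-symmetric algebra over `ℂ` whose canonical
decomposition has all root spaces of dimension at most one, elements of opposite
nonzero root spaces commute: `v·w = w·v` for `v ∈ A^λ`, `w ∈ A^{−λ}`. -/
theorem leftSymmetric_one_dimensional_opposite_roots_commute (A : Type*)
    [LieRing A] [LieAlgebra ℂ A] [FiniteDimensional ℂ A]
    (mul : A →ₗ[ℂ] A →ₗ[ℂ] A)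
    (hbr : ∀ x y : A, ⁅x, y⁆ = mul x y - mul y x)
    (hls : ∀ x y z : A,
      mul x (mul y z) - mul (mul x y) z = mul y (mul x z) - mul (mul y x) z)
    (hcomplete : ∀ x : A, IsNilpotent (mul.flip x))
    (H : LieSubalgebra ℂ A) (hH : H.IsCartanSubalgebra)
    (hcanon : ∀ χ : H → ℂ,
      (⨅ x : H, Module.End.maxGenEigenspace (mul (x : A)) (χ x)) =
        ⨅ x : H, Module.End.maxGenEigenspace (mul (x : A) - mul.flip (x : A)) (χ x))
    (hdim : ∀ χ : H → ℂ,
      Module.finrank ℂ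
        (⨅ x : H, Module.End.maxGenEigenspace (mul (x : A)) (χ x) : Submodule ℂ A) ≤ 1)
    (lam : H → ℂ) (x₀ : H) (hx₀ : lam x₀ ≠ 0) :
    ∀ v w : A,
      v ∈ (⨅ x : H, Module.End.maxGenEigenspace (mul (x : A)) (lam x)) →
      w ∈ (⨅ x : H, Module.End.maxGenEigenspace (mul (x : A)) (-(lam x))) →
      mul v w = mul w v := by
  classical
  haveI : H.IsCartanSubalgebra := hH
  intro v w hv hw
  rcases eq_or_ne v 0 with rfl | hv0
  · simp
  rcases eq_or_ne w 0 with rfl | hw0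
  · simp
  -- the adjoint operator of `x : H` on `A` agrees with `mul x - mul.flip x`
  have hadEnd : ∀ x : H, toEnd ℂ H A x = mul (x : A) - mul.flip (x : A) := by
    intro x
    ext m
    rw [toEnd_apply_apply, LieSubalgebra.coe_bracket_of_module, hbr]
    simp [LinearMap.sub_apply, LinearMap.flip_apply]
  -- bridge to mathlib's generalized weight spaces
  have hbridge : ∀ χ : H → ℂ,
      (⨅ x : H, Module.End.maxGenEigenspace (mul (x : A)) (χ x))
        = ((genWeightSpace A χ : LieSubmodule ℂ H A) : Submodule ℂ A) := by
    intro χ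
    rw [hcanon χ]
    have h1 : (genWeightSpace A χ : LieSubmodule ℂ H A)
        = ⨅ x : H, genWeightSpaceOf A (χ x) x := rfl
    rw [h1, LieSubmodule.iInf_toSubmodule]
    exact iInf_congr fun x => by rw [← hadEnd x]; rfl
  -- the zero weight space is `H`
  have hW0 : (⨅ x : H, Module.End.maxGenEigenspace (mul (x : A)) ((0 : H → ℂ) x))
      = (H : Submodule ℂ A) := by
    rw [hbridge (0 : H → ℂ)]
    have h2 : (genWeightSpace A (0 : H → ℂ) : LieSubmodule ℂ H A) = H.toLieSubmodule := by
      rw [← rootSpace_zero_eq ℂ A H]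
    rw [h2, LieSubalgebra.coe_toLieSubmodule]
  -- pointwise product rule
  have hprod : ∀ (χ₁ χ₂ : H → ℂ) (z₁ z₂ : A),
      (∀ x : H, z₁ ∈ Module.End.maxGenEigenspace (mul (x : A) - mul.flip (x : A)) (χ₁ x)) →
      (∀ x : H, z₂ ∈ Module.End.maxGenEigenspace (mul (x : A)) (χ₂ x)) →
      ∀ x : H, mul z₁ z₂ ∈ Module.End.maxGenEigenspace (mul (x : A)) (χ₁ x + χ₂ x) := by
    intro χ₁ χ₂ z₁ z₂ h1 h2 x
    refine maxGenEigenspace_bilinear mul _ _ _ ?_ _ _ z₁ z₂ (h1 x) (h2 x)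
    intro m n
    rw [eq_add_of_sub_eq (hls (x : A) m n)]
    simp only [LinearMap.sub_apply, LinearMap.flip_apply, map_sub, LinearMap.sub_apply]
    abel
  -- ad-side membership from L-side membership
  have hadmem : ∀ (χ : H → ℂ) (z : A),
      z ∈ (⨅ x : H, Module.End.maxGenEigenspace (mul (x : A)) (χ x)) →
      ∀ x : H, z ∈ Module.End.maxGenEigenspace (mul (x : A) - mul.flip (x : A)) (χ x) := by
    intro χ z hz
    rw [hcanon χ] at hz
    exact Submodule.mem_iInf _ |>.mp hz
  -- elements of H, viewed in the zero weight space, pointwise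
  have hxmem : ∀ (x y : H),
      (x : A) ∈ Module.End.maxGenEigenspace (mul (y : A)) ((0 : H → ℂ) y) := by
    intro x y
    have : (x : A) ∈ (⨅ y : H, Module.End.maxGenEigenspace (mul (y : A)) ((0 : H → ℂ) y)) := by
      rw [hW0]; exact (LieSubalgebra.mem_toSubmodule H).mpr x.2
    exact Submodule.mem_iInf _ |>.mp this y
  -- right multiplication by H preserves weight spaces
  have hrmul : ∀ (χ : H → ℂ) (z : A),
      z ∈ (⨅ x : H, Module.End.maxGenEigenspace (mul (x : A)) (χ x)) →
      ∀ x : H, mul z (x : A) ∈ (⨅ y : H, Module.End.maxGenEigenspace (mul (y : A)) (χ y)) := by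
    intro χ z hz x
    have h1 := hprod χ (0 : H → ℂ) z (x : A) (hadmem χ z hz) (hxmem x)
    refine Submodule.mem_iInf _ |>.mpr fun y => ?_
    simpa using h1 y
  -- bracket with H preserves weight spaces
  have hlie : ∀ (χ : H → ℂ) (z : A),
      z ∈ (⨅ x : H, Module.End.maxGenEigenspace (mul (x : A)) (χ x)) →
      ∀ x : H, ⁅(x : A), z⁆ ∈ (⨅ y : H, Module.End.maxGenEigenspace (mul (y : A)) (χ y)) := by
    intro χ z hz x
    rw [hbridge χ] at hz ⊢
    have hz' : z ∈ genWeightSpace A χ := hz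
    have := (genWeightSpace A χ).lie_mem (x := x) hz'
    rwa [LieSubalgebra.coe_bracket_of_module] at this
  -- left multiplication by H preserves weight spaces
  have hlmul : ∀ (χ : H → ℂ) (z : A),
      z ∈ (⨅ x : H, Module.End.maxGenEigenspace (mul (x : A)) (χ x)) →
      ∀ x : H, mul (x : A) z ∈ (⨅ y : H, Module.End.maxGenEigenspace (mul (y : A)) (χ y)) := by
    intro χ z hz x
    have h1 : mul (x : A) z = ⁅(x : A), z⁆ + mul z (x : A) := by
      rw [hbr]; abel
    rw [h1]
    exact Submodule.add_mem _ (hlie χ z hz x) (hrmul χ z hz x)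
  -- scalar action of left multiplication
  have hscalarL : ∀ (χ : H → ℂ) (z : A),
      z ∈ (⨅ x : H, Module.End.maxGenEigenspace (mul (x : A)) (χ x)) →
      ∀ x : H, mul (x : A) z = χ x • z := by
    intro χ z hz x
    refine scalar_of_dim_le_one _ (hdim χ) (mul (x : A)) (χ x)
      (fun z' hz' => hlmul χ z' hz' x) (fun z' hz' => Submodule.mem_iInf _ |>.mp hz' x) z hz
  -- scalar action of the bracket
  have hscalarAd : ∀ (χ : H → ℂ) (z : A),
      z ∈ (⨅ x : H, Module.End.maxGenEigenspace (mul (x : A)) (χ x)) →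
      ∀ x : H, ⁅(x : A), z⁆ = χ x • z := by
    intro χ z hz x
    have key : (mul (x : A) - mul.flip (x : A)) z = χ x • z := by
      refine scalar_of_dim_le_one _ (hdim χ) (mul (x : A) - mul.flip (x : A)) (χ x)
        (fun z' hz' => ?_) (fun z' hz' => hadmem χ z' hz' x) z hz
      have h1 : (mul (x : A) - mul.flip (x : A)) z' = ⁅(x : A), z'⁆ := by
        rw [hbr]; simp [LinearMap.sub_apply, LinearMap.flip_apply]
      rw [h1]
      exact hlie χ z' hz' x
    rw [hbr]
    simpa [LinearMap.sub_apply, LinearMap.flip_apply] using key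
  -- right multiplication by elements of H kills weight vectors
  have hzero : ∀ (χ : H → ℂ) (z : A),
      z ∈ (⨅ x : H, Module.End.maxGenEigenspace (mul (x : A)) (χ x)) →
      ∀ x : H, mul z (x : A) = 0 := by
    intro χ z hz x
    have h1 : mul z (x : A) = mul (x : A) z - ⁅(x : A), z⁆ := by
      rw [hbr]; abel
    rw [h1, hscalarL χ z hz x, hscalarAd χ z hz x, sub_self]
  -- memberships of v and w
  have hv' : ∀ x : H, v ∈ Module.End.maxGenEigenspace (mul (x : A)) (lam x) :=
    Submodule.mem_iInf _ |>.mp hv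
  have hvad := hadmem lam v hv
  have hwad := hadmem (fun x => -(lam x)) w hw
  have hw' : ∀ x : H, w ∈ Module.End.maxGenEigenspace (mul (x : A)) (-(lam x)) :=
    Submodule.mem_iInf _ |>.mp hw
  -- p = v·w and q = w·v lie in H
  have hpH : mul v w ∈ (H : Submodule ℂ A) := by
    rw [← hW0]
    refine Submodule.mem_iInf _ |>.mpr fun x => ?_
    have := hprod lam (fun x => -(lam x)) v w hvad hw' x
    simpa using this
  have hqH : mul w v ∈ (H : Submodule ℂ A) := by
    rw [← hW0]
    refine Submodule.mem_iInf _ |>.mpr fun x => ?_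
    have := hprod (fun x => -(lam x)) lam w v hwad hv' x
    simpa using this
  set pH : H := ⟨mul v w, (LieSubalgebra.mem_toSubmodule H).mp hpH⟩ with hpHdef
  set qH : H := ⟨mul w v, (LieSubalgebra.mem_toSubmodule H).mp hqH⟩ with hqHdef
  set δ : ℂ := lam pH - lam qH with hδdef
  -- the chain e_{k+1} = v·e_k
  set f : ℕ → A := fun k => ((mul v) ^ k) v with hfdef
  have hf0 : f 0 = v := by simp [hfdef]
  have hfsucc : ∀ k, f (k + 1) = mul v (f k) := by
    intro k
    show ((mul v) ^ (k + 1)) v = mul v (((mul v) ^ k) v)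
    rw [pow_succ', Module.End.mul_apply]
  have hfPt : ∀ (k : ℕ) (x : H),
      f k ∈ Module.End.maxGenEigenspace (mul (x : A)) (((k : ℂ) + 1) * lam x) := by
    intro k
    induction k with
    | zero =>
      intro x
      have := hv' x
      simpa [hf0] using this
    | succ k ih =>
      intro x
      have h1 := hprod lam (fun x => ((k : ℂ) + 1) * lam x) v (f k) hvad ih x
      have he : lam x + ((k : ℂ) + 1) * lam x = (((k + 1 : ℕ) : ℂ) + 1) * lam x := by
        push_cast; ring
      rw [hfsucc k, ← he]
      exact h1
  have hfW : ∀ k : ℕ,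
      f k ∈ (⨅ x : H, Module.End.maxGenEigenspace (mul (x : A)) (((k : ℂ) + 1) * lam x)) :=
    fun k => Submodule.mem_iInf _ |>.mpr (hfPt k)
  have hfe : ∀ (k : ℕ) (x : H), mul (x : A) (f k) = (((k : ℂ) + 1) * lam x) • f k :=
    fun k x => hscalarL (fun x => ((k : ℂ) + 1) * lam x) (f k) (hfW k) x
  -- key recursion
  have claimB : ∀ k : ℕ,
      mul w (f (k + 1)) = (-(δ * ((k : ℂ) + 1) * ((k : ℂ) + 2) / 2)) • f k := by
    intro k
    induction k with
    | zero =>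
      have h := eq_add_of_sub_eq (hls w v (f 0))
      rw [hf0] at h
      have h1 : mul (mul w v) v = lam qH • v := hscalarL lam v hv qH
      have h2 : mul v (mul w v) = 0 := hzero lam v hv qH
      have h3 : mul (mul v w) v = lam pH • v := hscalarL lam v hv pH
      rw [hfsucc 0, hf0, h, h1, h2, h3, hδdef]
      push_cast
      module
    | succ k ih =>
      have h := eq_add_of_sub_eq (hls w v (f (k + 1)))
      have h1 : mul (mul w v) (f (k + 1)) = ((((k + 1 : ℕ) : ℂ) + 1) * lam qH) • f (k + 1) :=
        hfe (k + 1) qH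
      have h3 : mul (mul v w) (f (k + 1)) = ((((k + 1 : ℕ) : ℂ) + 1) * lam pH) • f (k + 1) :=
        hfe (k + 1) pH
      have h2 : mul v (mul w (f (k + 1)))
          = (-(δ * ((k : ℂ) + 1) * ((k : ℂ) + 2) / 2)) • f (k + 1) := by
        rw [ih, map_smul, ← hfsucc k]
      rw [hfsucc (k + 1), h, h1, h2, h3, hδdef]
      push_cast
      module
  -- the chain terminates
  have hstop : ∃ k : ℕ, f k = 0 := by
    by_contra hno
    push_neg at hno
    have heig : ∀ k : ℕ,
        Module.End.HasEigenvector (mul (x₀ : A)) (((k : ℂ) + 1) * lam x₀) (f k) := fun k =>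
      ⟨Module.End.mem_eigenspace_iff.mpr (hfe k x₀), hno k⟩
    have hinj : Function.Injective (fun k : ℕ => ((k : ℂ) + 1) * lam x₀) := by
      intro a b hab
      simp only at hab
      have h1 := mul_right_cancel₀ hx₀ hab
      have h2 : (a : ℂ) = (b : ℂ) := by
        have := add_right_cancel (b := (1 : ℂ)) h1
        exact this
      exact_mod_cast h2
    have hli := Module.End.eigenvectors_linearIndependent' (mul (x₀ : A))
      (fun k : ℕ => ((k : ℂ) + 1) * lam x₀) hinj f heig
    haveI := hli.finite_of_isNoetherian
    exact not_finite ℕ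
  -- extract the top of the chain and conclude δ = 0
  have hδ0 : δ = 0 := by
    set n := Nat.find hstop with hndef
    have hfn : f n = 0 := Nat.find_spec hstop
    have hn0 : n ≠ 0 := by
      intro h
      rw [h, hf0] at hfn
      exact hv0 hfn
    have hmem : f (n - 1) ≠ 0 := Nat.find_min hstop (by omega)
    have hcb := claimB (n - 1)
    rw [show n - 1 + 1 = n from by omega, hfn, map_zero] at hcb
    have hν : (-(δ * (((n - 1 : ℕ) : ℂ) + 1) * (((n - 1 : ℕ) : ℂ) + 2) / 2)) = 0 := by
      rcases smul_eq_zero.mp hcb.symm with h | h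
      · exact h
      · exact absurd h hmem
    have hA : (((n - 1 : ℕ) : ℂ) + 1) ≠ 0 := Nat.cast_add_one_ne_zero _
    have hB : (((n - 1 : ℕ) : ℂ) + 2) ≠ 0 := by
      have h2 : (((n - 1 : ℕ) : ℂ) + 2) = ((n - 1 + 1 : ℕ) : ℂ) + 1 := by push_cast; ring
      rw [h2]
      exact Nat.cast_add_one_ne_zero _
    rw [neg_eq_zero, div_eq_zero_iff] at hν
    rcases hν with hν | hν
    · rcases mul_eq_zero.mp hν with hν | hν
      · rcases mul_eq_zero.mp hν with hν | hν
        · exact hν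
        · exact absurd hν hA
      · exact absurd hν hB
    · exact absurd hν two_ne_zero
  -- finish
  by_contra hne
  have hd0 : mul v w - mul w v ≠ 0 := sub_ne_zero.mpr hne
  have hdH : mul v w - mul w v ∈ (H : Submodule ℂ A) := Submodule.sub_mem _ hpH hqH
  have hrk : Module.finrank ℂ ((H : Submodule ℂ A)) ≤ 1 := by
    rw [← hW0]; exact hdim (0 : H → ℂ)
  have hspan := span_eq_of_dim_le_one _ hrk hdH hd0
  have hx0mem : (x₀ : A) ∈ (H : Submodule ℂ A) := (LieSubalgebra.mem_toSubmodule H).mpr x₀.2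
  rw [hspan] at hx0mem
  obtain ⟨s, hs⟩ := Submodule.mem_span_singleton.mp hx0mem
  have h1 : mul (x₀ : A) v = lam x₀ • v := hscalarL lam v hv x₀
  have hp1 : mul (mul v w) v = lam pH • v := hscalarL lam v hv pH
  have hq1 : mul (mul w v) v = lam qH • v := hscalarL lam v hv qH
  have h2 : mul (x₀ : A) v = 0 := by
    rw [← hs, map_smul, LinearMap.smul_apply, map_sub, LinearMap.sub_apply, hp1, hq1]
    have : lam pH = lam qH := by
      have := sub_eq_zero.mp (by rw [← hδdef]; exact hδ0)
      exact this
    rw [this, sub_self, smul_zero]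
  rw [h2] at h1
  rcases smul_eq_zero.mp h1.symm with h | h
  · exact hx₀ h
  · exact hv0 h
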